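/- Under the hypotheses of the RealizableExpAT algorithm with parameters η ∈ (0,1) and L > 1 satisfying n ≤ ηLT, on any realizable input sequence of length T the number of false negative mistakes satisfies M₋ ≤ (log₂ L)/η + 1, and the number of false positive mistakes satisfies M₊ ≤ 6ηT. -/

import Mathlib

open Finset

private lemma two_rpow_le (η : ℝ) (h0 : 0 ≤ η) (h1 : η ≤ 1) : (2:ℝ) ^ η ≤ 1 + 3 * η := by
  have hlog : Real.log 2 ≤ 1 := by
    have := Real.log_le_sub_one_of_pos (x := 2) (by norm_num)
    linarith
  have hlog0 : 0 < Real.log 2 := Real.log_pos (by norm_num)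
  have hx : (2:ℝ) ^ η = Real.exp (Real.log 2 * η) := by
    rw [Real.rpow_def_of_pos (by norm_num)]
  set t := Real.log 2 * η with ht
  have ht0 : 0 ≤ t := by positivity
  have ht1 : t ≤ 1 := by nlinarith
  have h2 : 1 - t ≤ Real.exp (-t) := by linarith [Real.add_one_le_exp (-t)]
  have h3 : Real.exp t ≤ Real.exp 1 := Real.exp_le_exp.mpr ht1
  have he : Real.exp 1 ≤ 3 := by linarith [Real.exp_one_lt_d9]
  have hp : 0 < Real.exp t := Real.exp_pos t
  have h4 : Real.exp t * (1 - t) ≤ 1 := by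
    have := mul_le_mul_of_nonneg_left h2 hp.le
    rw [← Real.exp_add] at this
    simpa using this
  have h5 : Real.exp t - 1 ≤ t * Real.exp t := by nlinarith
  have : Real.exp t ≤ 1 + 3 * t := by nlinarith
  rw [hx]; nlinarith

/-- Mistake bounds of `RealizableExpAT`. The algorithm's state: version space `V`,
distances `dist`, and predictions `yhat` (predict `1` iff the total weight of alive
experts predicting `1` reaches the threshold `L`). On a realizable sequence, under
`η ∈ (0,1)`, `L > 1` and `n ≤ ηLT`, the number of false negatives is at most
`log₂ L / η + 1` and the number of false positives is at most `6ηT`. -/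
theorem realizableExpAT_mistake_bounds
    (n T : ℕ) (η L : ℝ) (hη : η ∈ Set.Ioo (0 : ℝ) 1) (hL : 1 < L)
    (hn : (n : ℝ) ≤ η * L * T)
    (p : Fin T → Fin n → Bool) (y : Fin T → Bool)
    (hreal : ∃ j : Fin n, ∀ t, p t j = y t)
    (V : ℕ → Finset (Fin n)) (dist : ℕ → Fin n → ℕ)
    (hV0 : V 0 = Finset.univ) (hdist0 : ∀ j, dist 0 j = 0)
    (yhat : Fin T → Bool)
    (hyhat : ∀ t : Fin T, yhat t = true ↔
      L ≤ ∑ j ∈ (V t.val).filter (fun j => p t j = true), (2 : ℝ) ^ (η * dist t.val j))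
    (hup1 : ∀ t : Fin T, yhat t = true →
      (∀ j, dist (t.val + 1) j = dist t.val j) ∧
      V (t.val + 1) =
        (if y t = true then V t.val else (V t.val).filter (fun j => p t j = false)))
    (hup0 : ∀ t : Fin T, yhat t = false →
      V (t.val + 1) = V t.val ∧
      ∀ j, dist (t.val + 1) j = dist t.val j + (if p t j = true then 1 else 0)) :
    ((Finset.univ.filter (fun t : Fin T => yhat t = false ∧ y t = true)).card : ℝ)
        ≤ Real.logb 2 L / η + 1 ∧
    ((Finset.univ.filter (fun t : Fin T => yhat t = true ∧ y t = false)).card : ℝ)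
        ≤ 6 * η * T := by
  obtain ⟨hη0, hη1⟩ := hη
  obtain ⟨j0, hj0⟩ := hreal
  have hL0 : (0:ℝ) < L := lt_trans one_pos hL
  -- j0 stays in the version space
  have hjV : ∀ t : ℕ, t ≤ T → j0 ∈ V t := by
    intro t
    induction t with
    | zero => intro _; rw [hV0]; exact mem_univ j0
    | succ t ih =>
      intro ht
      have ht' : t < T := ht
      have hmem := ih ht'.le
      set τ : Fin T := ⟨t, ht'⟩ with hτ
      have hτv : τ.val = t := rfl
      by_cases hy : yhat τ = true
      · obtain ⟨_, hVup⟩ := hup1 τ hy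
        rw [hτv] at hVup
        rw [hVup]
        by_cases hyt : y τ = true
        · rw [if_pos hyt]; exact hmem
        · rw [if_neg hyt]
          refine mem_filter.mpr ⟨hmem, ?_⟩
          rw [hj0]
          simpa using hyt
      · have hb : yhat τ = false := by simpa using hy
        obtain ⟨hVup, _⟩ := hup0 τ hb
        rw [hτv] at hVup
        rw [hVup]; exact hmem
  -- the FN count up to time t is at most dist t j0
  have hFNd : ∀ t : ℕ, t ≤ T →
      (univ.filter (fun s : Fin T => s.val < t ∧ yhat s = false ∧ y s = true)).card
        ≤ dist t j0 := by
    intro t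
    induction t with
    | zero => intro _; simp
    | succ t ih =>
      intro ht
      have ht' : t < T := ht
      have ihh := ih ht'.le
      set τ : Fin T := ⟨t, ht'⟩ with hτ
      have hτv : τ.val = t := rfl
      by_cases hFN : yhat τ = false ∧ y τ = true
      · have hsub : univ.filter (fun s : Fin T => s.val < t+1 ∧ yhat s = false ∧ y s = true)
            ⊆ insert τ (univ.filter (fun s : Fin T => s.val < t ∧ yhat s = false ∧ y s = true)) := by
          intro s hs
          simp only [mem_filter, mem_univ, true_and] at hs
          rcases Nat.lt_succ_iff_lt_or_eq.mp hs.1 with h | h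
          · exact mem_insert_of_mem (by simp only [mem_filter, mem_univ, true_and]; exact ⟨h, hs.2⟩)
          · exact mem_insert.mpr (Or.inl (Fin.ext h))
        have hd : dist (t+1) j0 = dist t j0 + 1 := by
          obtain ⟨_, hdd⟩ := hup0 τ hFN.1
          have := hdd j0
          rw [hτv] at this
          rw [this, hj0, hFN.2, if_pos rfl]
        calc (univ.filter (fun s : Fin T => s.val < t+1 ∧ yhat s = false ∧ y s = true)).card
            ≤ (insert τ (univ.filter (fun s : Fin T => s.val < t ∧ yhat s = false ∧ y s = true))).card :=
              card_le_card hsub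
          _ ≤ (univ.filter (fun s : Fin T => s.val < t ∧ yhat s = false ∧ y s = true)).card + 1 :=
              card_insert_le _ _
          _ ≤ dist t j0 + 1 := by omega
          _ = dist (t+1) j0 := hd.symm
      · have hset : univ.filter (fun s : Fin T => s.val < t+1 ∧ yhat s = false ∧ y s = true)
            = univ.filter (fun s : Fin T => s.val < t ∧ yhat s = false ∧ y s = true) := by
          apply filter_congr
          intro s _
          constructor
          · rintro ⟨h1, h2⟩
            rcases Nat.lt_succ_iff_lt_or_eq.mp h1 with h | h
            · exact ⟨h, h2⟩
            · exact absurd ((Fin.ext (h.trans hτv.symm) : s = τ) ▸ h2) hFN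
          · rintro ⟨h1, h2⟩; exact ⟨h1.trans (Nat.lt_succ_self t), h2⟩
        have hd : dist t j0 ≤ dist (t+1) j0 := by
          by_cases hy : yhat τ = true
          · obtain ⟨hdd, _⟩ := hup1 τ hy
            have := hdd j0
            rw [hτv] at this
            omega
          · have hb : yhat τ = false := by simpa using hy
            obtain ⟨_, hdd⟩ := hup0 τ hb
            have := hdd j0
            rw [hτv] at this
            omega
        rw [hset]
        omega
  constructor
  · -- false negative bound
    set S := univ.filter (fun t : Fin T => yhat t = false ∧ y t = true) with hS
    have hlogb0 : 0 < Real.logb 2 L := Real.logb_pos (by norm_num) hL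
    rcases S.eq_empty_or_nonempty with h | h
    · rw [h]
      simp only [card_empty, Nat.cast_zero]
      positivity
    · set t := S.max' h with htdef
      have htS : t ∈ S := S.max'_mem h
      simp only [hS, mem_filter, mem_univ, true_and] at htS
      -- all other FN rounds have smaller index
      have hsub : S.erase t ⊆ univ.filter (fun s : Fin T => s.val < t.val ∧ yhat s = false ∧ y s = true) := by
        intro s hs
        obtain ⟨hne, hsS⟩ := mem_erase.mp hs
        have hle : s ≤ t := S.le_max' s hsS
        simp only [hS, mem_filter, mem_univ, true_and] at hsS
        simp only [mem_filter, mem_univ, true_and]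
        exact ⟨lt_of_le_of_ne hle (fun hc => hne (Fin.ext hc)), hsS⟩
      have hcard : S.card ≤ dist t.val j0 + 1 := by
        have h1 : (S.erase t).card ≤ dist t.val j0 :=
          le_trans (card_le_card hsub) (hFNd t.val t.isLt.le)
        have h2 : (S.erase t).card = S.card - 1 := card_erase_of_mem (S.max'_mem h)
        have h3 : 1 ≤ S.card := card_pos.mpr h
        omega
      -- at round t, the weight of j0 is below L
      have hj0mem : j0 ∈ (V t.val).filter (fun j => p t j = true) :=
        mem_filter.mpr ⟨hjV t.val t.isLt.le, by rw [hj0, htS.2]⟩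
      have hsum : ∑ j ∈ (V t.val).filter (fun j => p t j = true), (2:ℝ) ^ (η * dist t.val j) < L := by
        by_contra hc
        push_neg at hc
        have := (hyhat t).mpr hc
        rw [htS.1] at this
        exact Bool.false_ne_true this
      have hone : (2:ℝ) ^ (η * dist t.val j0) < L :=
        lt_of_le_of_lt (single_le_sum (f := fun j => (2:ℝ) ^ (η * dist t.val j))
          (fun i _ => by positivity) hj0mem) hsum
      have hlt : η * dist t.val j0 < Real.logb 2 L := by
        have h1 : Real.logb 2 ((2:ℝ) ^ (η * dist t.val j0)) < Real.logb 2 L :=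
          Real.logb_lt_logb (by norm_num) (by positivity) hone
        rwa [Real.logb_rpow (by norm_num) (by norm_num)] at h1
      have hd : (dist t.val j0 : ℝ) ≤ Real.logb 2 L / η := by
        rw [le_div_iff₀ hη0]
        nlinarith
      calc (S.card : ℝ) ≤ (dist t.val j0 : ℝ) + 1 := by exact_mod_cast hcard
        _ ≤ Real.logb 2 L / η + 1 := by linarith
  · -- false positive bound via potential function
    set Φ : ℕ → ℝ := fun t => ∑ j ∈ V t, (2:ℝ) ^ (η * dist t j) with hΦ
    have hpow := two_rpow_le η hη0.le hη1.le
    have key : ∀ t : ℕ, t ≤ T →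
        Φ t + L * (univ.filter (fun s : Fin T => s.val < t ∧ yhat s = true ∧ y s = false)).card
          ≤ n + 3 * η * L * t := by
      intro t
      induction t with
      | zero =>
        intro _
        have : Φ 0 = n := by
          simp only [hΦ, hV0]
          rw [Finset.sum_congr rfl (fun j _ => by rw [hdist0 j])]
          simp
        rw [this]
        simp
      | succ t ih =>
        intro ht
        have ht' : t < T := ht
        have ihh := ih ht'.le
        set τ : Fin T := ⟨t, ht'⟩ with hτ
        have hτv : τ.val = t := rfl
        have hcast : ((t:ℝ) + 1) = ((t+1 : ℕ) : ℝ) := by push_cast; ring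
        by_cases hy : yhat τ = true
        · obtain ⟨hd, hVup⟩ := hup1 τ hy
          rw [hτv] at hVup
          have hdeq : ∀ j, dist (t+1) j = dist t j := by intro j; have := hd j; rwa [hτv] at this
          by_cases hyt : y τ = true
          · -- no change
            have hΦeq : Φ (t+1) = Φ t := by
              simp only [hΦ]
              rw [hVup, if_pos hyt]
              exact Finset.sum_congr rfl (fun j _ => by rw [hdeq j])
            have hset : univ.filter (fun s : Fin T => s.val < t+1 ∧ yhat s = true ∧ y s = false)
                = univ.filter (fun s : Fin T => s.val < t ∧ yhat s = true ∧ y s = false) := by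
              apply filter_congr
              intro s _
              constructor
              · rintro ⟨h1, h2⟩
                rcases Nat.lt_succ_iff_lt_or_eq.mp h1 with h | h
                · exact ⟨h, h2⟩
                · exfalso
                  have : s = τ := Fin.ext h
                  rw [this, hyt] at h2
                  exact Bool.noConfusion h2.2
              · rintro ⟨h1, h2⟩; exact ⟨h1.trans (Nat.lt_succ_self t), h2⟩
            rw [hΦeq, hset]
            have : (0:ℝ) ≤ 3 * η * L := by positivity
            push_cast
            nlinarith
          · -- false positive: weight at least L is removed
            have hS : L ≤ ∑ j ∈ (V t).filter (fun j => p τ j = true), (2:ℝ) ^ (η * dist t j) := by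
              have := (hyhat τ).mp hy
              rwa [hτv] at this
            have hsplit := Finset.sum_filter_add_sum_filter_not (V t) (fun j => p τ j = true)
              (fun j => (2:ℝ) ^ (η * dist t j))
            have hfneg : (V t).filter (fun j => ¬ p τ j = true)
                = (V t).filter (fun j => p τ j = false) := by
              apply filter_congr
              intro s _
              simp [Bool.not_eq_true]
            have hΦeq : Φ (t+1)
                = Φ t - ∑ j ∈ (V t).filter (fun j => p τ j = true), (2:ℝ) ^ (η * dist t j) := by
              simp only [hΦ]
              rw [hVup, if_neg hyt]
              rw [Finset.sum_congr rfl (fun j _ => by rw [hdeq j])]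
              rw [← hfneg]
              linarith [hsplit]
            have hins : univ.filter (fun s : Fin T => s.val < t+1 ∧ yhat s = true ∧ y s = false)
                = insert τ (univ.filter (fun s : Fin T => s.val < t ∧ yhat s = true ∧ y s = false)) := by
              ext s
              simp only [mem_filter, mem_univ, true_and, mem_insert]
              constructor
              · rintro ⟨h1, h2⟩
                rcases Nat.lt_succ_iff_lt_or_eq.mp h1 with h | h
                · exact Or.inr ⟨h, h2⟩
                · exact Or.inl (Fin.ext h)
              · rintro (h | ⟨h1, h2⟩)
                · subst h
                  exact ⟨Nat.lt_succ_self t, hy, by simpa using hyt⟩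
                · exact ⟨h1.trans (Nat.lt_succ_self t), h2⟩
            have hnotmem : τ ∉ univ.filter (fun s : Fin T => s.val < t ∧ yhat s = true ∧ y s = false) := by
              simp only [mem_filter, mem_univ, true_and, hτv]
              intro hc
              exact absurd hc.1 (lt_irrefl t)
            rw [hins, card_insert_of_notMem hnotmem, hΦeq]
            have : (0:ℝ) ≤ 3 * η * L := by positivity
            push_cast
            nlinarith
        · -- yhat = 0: weights of predictors of 1 multiply by 2^η
          have hb : yhat τ = false := by simpa using hy
          obtain ⟨hVup, hd⟩ := hup0 τ hb
          rw [hτv] at hVup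
          have hdeq : ∀ j, dist (t+1) j = dist t j + (if p τ j = true then 1 else 0) := by
            intro j; have := hd j; rwa [hτv] at this
          have hSlt : ∑ j ∈ (V t).filter (fun j => p τ j = true), (2:ℝ) ^ (η * dist t j) < L := by
            by_contra hc
            push_neg at hc
            have := (hyhat τ).mpr (by rwa [hτv])
            rw [hb] at this
            exact Bool.false_ne_true this
          have hS0 : (0:ℝ) ≤ ∑ j ∈ (V t).filter (fun j => p τ j = true), (2:ℝ) ^ (η * dist t j) :=
            Finset.sum_nonneg (fun j _ => by positivity)
          have hsplit1 := Finset.sum_filter_add_sum_filter_not (V t) (fun j => p τ j = true)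
            (fun j => (2:ℝ) ^ (η * dist t j))
          have hsplit2 := Finset.sum_filter_add_sum_filter_not (V t) (fun j => p τ j = true)
            (fun j => (2:ℝ) ^ (η * dist (t+1) j))
          have hT : ∑ j ∈ (V t).filter (fun j => p τ j = true), (2:ℝ) ^ (η * dist (t+1) j)
              = (2:ℝ) ^ η * ∑ j ∈ (V t).filter (fun j => p τ j = true), (2:ℝ) ^ (η * dist t j) := by
            rw [Finset.mul_sum]
            apply Finset.sum_congr rfl
            intro j hj
            have hpj : p τ j = true := (mem_filter.mp hj).2
            rw [hdeq j, if_pos hpj]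
            push_cast
            rw [mul_add, mul_one, Real.rpow_add (by norm_num)]
            ring
          have hF : ∑ j ∈ (V t).filter (fun j => ¬ p τ j = true), (2:ℝ) ^ (η * dist (t+1) j)
              = ∑ j ∈ (V t).filter (fun j => ¬ p τ j = true), (2:ℝ) ^ (η * dist t j) := by
            apply Finset.sum_congr rfl
            intro j hj
            have hpj : ¬ p τ j = true := (mem_filter.mp hj).2
            rw [hdeq j, if_neg hpj]
            norm_num
          have hΦle : Φ (t+1) ≤ Φ t + 3 * η * L := by
            have hΦ1 : Φ (t+1) = ∑ j ∈ V t, (2:ℝ) ^ (η * dist (t+1) j) := by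
              simp only [hΦ, hVup]
            rw [hΦ1, ← hsplit2, hT, hF]
            have hΦ0 : Φ t = ∑ j ∈ (V t).filter (fun j => p τ j = true), (2:ℝ) ^ (η * dist t j)
                + ∑ j ∈ (V t).filter (fun j => ¬ p τ j = true), (2:ℝ) ^ (η * dist t j) := by
              simp only [hΦ]; linarith [hsplit1]
            rw [hΦ0]
            have h2η : (1:ℝ) ≤ (2:ℝ) ^ η := Real.one_le_rpow (by norm_num) hη0.le
            nlinarith
          have hset : univ.filter (fun s : Fin T => s.val < t+1 ∧ yhat s = true ∧ y s = false)
              = univ.filter (fun s : Fin T => s.val < t ∧ yhat s = true ∧ y s = false) := by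
            apply filter_congr
            intro s _
            constructor
            · rintro ⟨h1, h2⟩
              rcases Nat.lt_succ_iff_lt_or_eq.mp h1 with h | h
              · exact ⟨h, h2⟩
              · exfalso
                have : s = τ := Fin.ext h
                rw [this, hb] at h2
                exact Bool.false_ne_true h2.1
            · rintro ⟨h1, h2⟩; exact ⟨h1.trans (Nat.lt_succ_self t), h2⟩
          rw [hset]
          push_cast
          nlinarith
    have hfin := key T le_rfl
    have hΦT : 0 ≤ Φ T := Finset.sum_nonneg (fun j _ => by positivity)
    have hall : univ.filter (fun s : Fin T => s.val < T ∧ yhat s = true ∧ y s = false)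
        = univ.filter (fun s : Fin T => yhat s = true ∧ y s = false) := by
      apply filter_congr
      intro s _
      constructor
      · rintro ⟨_, h2⟩; exact h2
      · intro h2; exact ⟨s.isLt, h2⟩
    rw [hall] at hfin
    set c := ((univ.filter (fun s : Fin T => yhat s = true ∧ y s = false)).card : ℝ) with hc
    have hc0 : 0 ≤ c := by positivity
    have hT0 : (0:ℝ) ≤ T := Nat.cast_nonneg T
    have h4 : L * c ≤ 4 * η * L * T := by nlinarith
    have h5 : c ≤ 4 * η * T := by
      have := (mul_le_mul_iff_right₀ hL0).mp (by linarith : L * c ≤ L * (4 * η * T))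
      linarith
    nlinarith
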